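/- arXiv:1104.1366 — 2 statements merged into one kernel-verified Lean document; each statement's English description precedes it below -/
import Mathlib

section
/- Let K be a field and A a noetherian K-algebra such that for every simple left A-module L, every element of the endomorphism ring End_A(L) is algebraic over K. If A is (⋄)-extremal, then every element of the center Z(A) of A is algebraic over K. -/
universe u

/-- A module is monolithic if the intersection of all its nonzero submodules is nonzero. -/
def IsMonolithic (R : Type u) (M : Type v) [Ring R] [AddCommGroup M] [Module R M] : Prop :=
  sInf {N : Submodule R M | N ≠ ⊥} ≠ ⊥

/-- Property `(⋄)`: every finitely generated monolithic left module is artinian. -/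
def HasDiamond (R : Type u) [Ring R] : Prop :=
  ∀ (M : Type u) [AddCommGroup M] [Module R M],
    Module.Finite R M → IsMonolithic R M → IsArtinian R M

/-- A ring is `(⋄)`-extremal if it does not have property `(⋄)` but every proper
homomorphic image (surjective, non-injective ring-homomorphic image) has property `(⋄)`. -/
def DiamondExtremal (A : Type u) [Ring A] : Prop :=
  ¬ HasDiamond A ∧
    ∀ (B : Type u) [Ring B] (f : A →+* B),
      Function.Surjective f → ¬ Function.Injective f → HasDiamond B


/-- Copy a submodule over a ring `R` to a submodule over another ring `S` acting on the
same abelian group, provided every `S`-scalar acts as some `R`-scalar. -/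
def copySubmodule {R S M : Type*} [Ring R] [Ring S] [AddCommGroup M] [Module R M]
    [Module S M] (h : ∀ s : S, ∃ r : R, ∀ m : M, s • m = r • m) (N : Submodule R M) :
    Submodule S M where
  carrier := N
  add_mem' := fun ha hb => N.add_mem ha hb
  zero_mem' := N.zero_mem
  smul_mem' := by
    intro s m hm
    obtain ⟨r, hr⟩ := h s
    show s • m ∈ N
    rw [hr]
    exact N.smul_mem r hm

@[simp] lemma mem_copySubmodule {R S M : Type*} [Ring R] [Ring S] [AddCommGroup M]
    [Module R M] [Module S M] (h : ∀ s : S, ∃ r : R, ∀ m : M, s • m = r • m)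
    (N : Submodule R M) (x : M) : x ∈ copySubmodule h N ↔ x ∈ N := Iff.rfl

/-- An element `x ≠ 0` contained in every nonzero submodule witnesses monolithicity. -/
lemma isMonolithic_iff (R : Type u) (M : Type v) [Ring R] [AddCommGroup M] [Module R M] :
    IsMonolithic R M ↔ ∃ x : M, x ≠ 0 ∧ ∀ N : Submodule R M, N ≠ ⊥ → x ∈ N := by
  unfold IsMonolithic
  rw [Submodule.ne_bot_iff]
  constructor
  · rintro ⟨x, hx, hx0⟩
    exact ⟨x, hx0, fun N hN => Submodule.mem_sInf.mp hx N hN⟩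
  · rintro ⟨x, hx0, hx⟩
    exact ⟨x, Submodule.mem_sInf.mpr (fun N hN => hx N hN), hx0⟩

/-- Faithfulness of a f.g. monolithic non-artinian module over a ring whose proper
images all have property `(⋄)`. -/
lemma aux_faithful {A : Type u} [Ring A]
    (hd : ∀ (B : Type u) [Ring B] (f : A →+* B),
      Function.Surjective f → ¬ Function.Injective f → HasDiamond B)
    (M : Type u) [AddCommGroup M] [Module A M]
    (hfin : Module.Finite A M) (hmono : IsMonolithic A M) (hnart : ¬ IsArtinian A M) :
    ∀ a : A, (∀ m : M, a • m = 0) → a = 0 := by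
  intro a ha
  by_contra ha0
  set φ : A →+* AddMonoid.End M := Module.toAddMonoidEnd A M with hφ
  letI : Module φ.range M := Module.compHom M (φ.range).subtype
  have key : ∀ (a : A) (m : M), (φ.rangeRestrict a) • m = a • m := fun _ _ => rfl
  have hsurj : Function.Surjective φ.rangeRestrict := φ.rangeRestrict_surjective
  have hφa : φ a = 0 := DFunLike.ext _ _ ha
  have hninj : ¬ Function.Injective φ.rangeRestrict := by
    intro h
    apply ha0
    apply h
    apply Subtype.ext
    rw [φ.coe_rangeRestrict, φ.coe_rangeRestrict, hφa, map_zero]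
  have hAB : ∀ s : A, ∃ r : φ.range, ∀ m : M, s • m = r • m :=
    fun s => ⟨φ.rangeRestrict s, fun m => (key s m).symm⟩
  have hBA : ∀ s : φ.range, ∃ r : A, ∀ m : M, s • m = r • m := by
    intro s
    obtain ⟨r, rfl⟩ := hsurj s
    exact ⟨r, fun m => key r m⟩
  -- M is a finite module over the range
  haveI hfinB : Module.Finite φ.range M := by
    obtain ⟨S, hS⟩ := hfin.fg_top
    refine ⟨⟨S, ?_⟩⟩
    rw [Submodule.eq_top_iff']
    intro x
    have hx : x ∈ Submodule.span A (S : Set M) := by rw [hS]; trivial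
    have hle : Submodule.span A (S : Set M) ≤
        copySubmodule hAB (Submodule.span φ.range (S : Set M)) :=
      Submodule.span_le.mpr (fun y hy => Submodule.subset_span hy)
    exact hle hx
  -- M is monolithic over the range
  have hmonoB : IsMonolithic φ.range M := by
    rw [isMonolithic_iff] at hmono ⊢
    obtain ⟨x, hx0, hx⟩ := hmono
    refine ⟨x, hx0, fun N hN => ?_⟩
    have : x ∈ copySubmodule hAB N := by
      apply hx
      intro hbot
      apply hN
      rw [eq_bot_iff] at hbot ⊢
      intro y hy
      exact hbot hy
    exact this
  have hart : IsArtinian φ.range M := hd φ.range φ.rangeRestrict hsurj hninj M hfinB hmonoB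
  apply hnart
  rw [isArtinian_iff]
  rw [isArtinian_iff] at hart
  have wfInv : WellFounded (InvImage (· < ·) (copySubmodule hBA)) := InvImage.wf _ hart
  refine Subrelation.wf ?_ wfInv
  intro N N' hlt
  show copySubmodule hBA N < copySubmodule hBA N'
  rw [lt_iff_le_not_ge] at hlt ⊢
  obtain ⟨hle, hnle⟩ := hlt
  constructor
  · intro x hx
    exact hle hx
  · intro hle'
    exact hnle (fun x hx => hle' hx)

/-- Proposition 5.1: let `A` be a noetherian `K`-algebra such that every
endomorphism of every simple left `A`-module is algebraic over `K` (each `f : End_A L`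
satisfies a nonzero polynomial with coefficients in `K`, acting on `L` through
`algebraMap K A`).  If `A` is `(⋄)`-extremal, then every central element of `A` is
algebraic over `K`. -/
theorem center_algebraic_of_diamondExtremal {K A : Type u} [Field K] [Ring A] [Algebra K A]
    [IsNoetherianRing A]
    (hEnd : ∀ (L : Type u) [AddCommGroup L] [Module A L], IsSimpleModule A L →
      ∀ f : Module.End A L, ∃ p : Polynomial K, p ≠ 0 ∧
        ∀ v : L,
          (∑ i ∈ Finset.range (p.natDegree + 1),
            algebraMap K A (p.coeff i) • ((f ^ i) v)) = 0)
    (hext : DiamondExtremal A) :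
    ∀ z ∈ Subring.center A, IsAlgebraic K z := by
  intro z hz
  by_contra halg
  obtain ⟨hnd, hd⟩ := hext
  rw [HasDiamond] at hnd
  push_neg at hnd
  obtain ⟨M, i1, i2, hfin, hmono, hnart⟩ := hnd
  have hfaith := aux_faithful hd M hfin hmono hnart
  set L : Submodule A M := sInf {N : Submodule A M | N ≠ ⊥} with hLdef
  have hL : L ≠ ⊥ := hmono
  obtain ⟨x, hxL, hx0⟩ := (Submodule.ne_bot_iff L).mp hL
  haveI : Nontrivial ↥L :=
    ⟨⟨⟨x, hxL⟩, 0, by simp [Subtype.ext_iff, hx0]⟩⟩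
  -- L is a simple module
  haveI hsimp : IsSimpleModule A ↥L := by
    rw [isSimpleModule_iff]; constructor
    intro N
    rcases eq_or_ne N ⊥ with h | h
    · exact Or.inl h
    · refine Or.inr ?_
      obtain ⟨y, hyN, hy0⟩ := (Submodule.ne_bot_iff N).mp h
      have hmap : Submodule.map L.subtype N ≠ ⊥ := by
        rw [Submodule.ne_bot_iff]
        exact ⟨(y : M), ⟨y, hyN, rfl⟩, fun h => hy0 (Subtype.ext h)⟩
      have hle : L ≤ Submodule.map L.subtype N := sInf_le hmap
      rw [eq_top_iff]
      rintro w -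
      obtain ⟨u, huN, hu⟩ := hle w.2
      rwa [← show u = w from Subtype.ext hu]
  have hzc : ∀ g : A, g * z = z * g := Subring.mem_center_iff.mp hz
  -- z acts as an A-linear endomorphism of L
  let f : Module.End A ↥L :=
    { toFun := fun v => z • v
      map_add' := fun v w => smul_add z v w
      map_smul' := by
        intro a v
        apply Subtype.ext
        show z • (a • (v : M)) = a • (z • (v : M))
        rw [smul_smul, smul_smul, ← hzc a] }
  obtain ⟨p, hp0, hpv⟩ := hEnd ↥L hsimp f
  have hfpow : ∀ (i : ℕ) (v : ↥L), (f ^ i) v = z ^ i • v := by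
    intro i
    induction i with
    | zero => intro v; simp
    | succ n ih =>
      intro v
      rw [pow_succ, Module.End.mul_apply, ih (f v)]
      show z ^ n • (z • v) = z ^ (n + 1) • v
      rw [smul_smul, ← pow_succ]
  set a : A := Polynomial.aeval z p with hadef
  have haeval : ∀ q : Polynomial K, q ≠ 0 → Polynomial.aeval z q ≠ 0 := by
    intro q hq hzq
    exact halg ⟨q, hq, hzq⟩
  have hapow : ∀ i : ℕ, a ^ i ≠ 0 := by
    intro i
    rw [hadef, ← map_pow]
    exact haeval _ (pow_ne_zero i hp0)
  have haL : ∀ v : ↥L, a • (v : M) = 0 := by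
    intro v
    have h2 : a • v = (0 : ↥L) := by
      rw [hadef, Polynomial.aeval_eq_sum_range, Finset.sum_smul, ← hpv v]
      refine Finset.sum_congr rfl (fun i _ => ?_)
      rw [hfpow i v, Algebra.smul_def, mul_smul]
    have := congrArg Subtype.val h2
    simpa using this
  have haZ : a ∈ Subring.center A := by
    rw [hadef, Polynomial.aeval_eq_sum_range]
    apply Subring.sum_mem
    intro i _
    rw [Algebra.smul_def]
    exact Subring.mul_mem _
      (Subring.mem_center_iff.mpr (fun g => (Algebra.commutes _ g).symm))
      (pow_mem hz i)
  have hcen : ∀ (i : ℕ) (r : A), a ^ i * r = r * a ^ i :=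
    fun i r => (Subring.mem_center_iff.mp (pow_mem haZ i) r).symm
  -- torsion submodules
  let tor : ℕ → Submodule A M := fun i =>
    { carrier := {m | a ^ i • m = 0}
      add_mem' := by
        intro m m' hm hm'
        show a ^ i • (m + m') = 0
        rw [smul_add, show a ^ i • m = 0 from hm, show a ^ i • m' = 0 from hm', add_zero]
      zero_mem' := smul_zero _
      smul_mem' := by
        intro r m hm
        show a ^ i • (r • m) = 0
        rw [smul_smul, hcen i r, mul_smul, show a ^ i • m = 0 from hm, smul_zero] }
  have htor : ∀ i, tor i ≤ tor (i + 1) := by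
    intro i m hm
    show a ^ (i + 1) • m = 0
    rw [pow_succ', mul_smul, show a ^ i • m = 0 from hm, smul_zero]
  have hstrict : ∀ i, ∃ m, m ∈ tor (i + 1) ∧ m ∉ tor i := by
    intro i
    let P : Submodule A M :=
      { carrier := Set.range (fun m : M => a ^ i • m)
        add_mem' := by
          rintro _ _ ⟨m, rfl⟩ ⟨m', rfl⟩
          exact ⟨m + m', smul_add _ _ _⟩
        zero_mem' := ⟨0, smul_zero _⟩
        smul_mem' := by
          rintro r _ ⟨m, rfl⟩
          exact ⟨r • m, by show a ^ i • (r • m) = r • a ^ i • m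
                           rw [smul_smul, hcen i r, mul_smul]⟩ }
    have hP : P ≠ ⊥ := by
      intro hbot
      apply hapow i
      apply hfaith
      intro m
      have hmem : a ^ i • m ∈ P := ⟨m, rfl⟩
      rw [hbot] at hmem
      simpa using hmem
    have hxP : x ∈ P := (sInf_le hP : L ≤ P) hxL
    obtain ⟨m, hm⟩ := hxP
    have hm' : a ^ i • m = x := hm
    refine ⟨m, ?_, ?_⟩
    · show a ^ (i + 1) • m = 0
      rw [pow_succ', mul_smul, hm']
      exact haL ⟨x, hxL⟩
    · intro hmem
      exact hx0 (by rw [← hm']; exact hmem)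
  haveI : IsNoetherian A M := isNoetherian_of_isNoetherianRing_of_finite A M
  obtain ⟨n, hn⟩ := monotone_stabilizes_iff_noetherian.mpr ‹IsNoetherian A M›
    ⟨tor, monotone_nat_of_le_succ htor⟩
  obtain ⟨m, hm1, hm2⟩ := hstrict n
  exact hm2 ((show tor n = tor (n + 1) from hn (n + 1) (Nat.le_succ n)) ▸ hm1)
end

section
/- Let K be a field of characteristic zero and let r ≥ 1 be an integer. Then the algebra A = K⟨a,b⟩/(ab − ba − a^r) has a finitely generated monolithic left module that is not artinian; that is, A does not have property (⋄). -/
universe u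

noncomputable section

/-- The defining relation `ab = ba + a^r` of the Ore extension `K[a][b; d]` with
`d(a) = a^r`, as a relation on the free algebra on two generators. -/
def oreRel (K : Type u) [Field K] (r : ℕ) :
    FreeAlgebra K (Fin 2) → FreeAlgebra K (Fin 2) → Prop := fun X Y =>
  X = FreeAlgebra.ι K (0 : Fin 2) * FreeAlgebra.ι K (1 : Fin 2) ∧
  Y = FreeAlgebra.ι K (1 : Fin 2) * FreeAlgebra.ι K (0 : Fin 2) +
      (FreeAlgebra.ι K (0 : Fin 2)) ^ r

/-- The Ore extension `A = K⟨a,b⟩/(ab − ba − a^r)`. -/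
abbrev OreExt (K : Type u) [Field K] (r : ℕ) := RingQuot (oreRel K r)

namespace OreAux

open Polynomial

variable {K : Type u} [Field K]

abbrev V (K : Type u) [Field K] : Type u := Polynomial K × Polynomial K

/-- the action of `a` -/
def Ab : V K →ₗ[K] V K where
  toFun m := (m.1.comp (X + C 1), X * m.2)
  map_add' m n := by simp [add_comp, mul_add, Prod.ext_iff]
  map_smul' c m := by simp [smul_comp, mul_smul_comm, Prod.ext_iff]

/-- the action of `b` -/
def Bb (r : ℕ) : V K →ₗ[K] V K where
  toFun m := (X * m.1.comp (X + C ((r : K) - 1)) + (m.2.eval 1) • 1,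
    -(X ^ r * derivative m.2))
  map_add' m n := by
    simp [add_comp, mul_add, add_smul, Prod.ext_iff]
    constructor
    · ring
    · ring
  map_smul' c m := by
    simp [smul_comp, mul_smul_comm, smul_smul, Prod.ext_iff, mul_comm, smul_add]

lemma Ab_apply (m : V K) : Ab m = (m.1.comp (X + C 1), X * m.2) := rfl

lemma Bb_apply (r : ℕ) (m : V K) :
    Bb r m = (X * m.1.comp (X + C ((r : K) - 1)) + (m.2.eval 1) • 1,
      -(X ^ r * derivative m.2)) := rfl

lemma Ab_pow (n : ℕ) (m : V K) :
    (Ab ^ n) m = (m.1.comp (X + C (n : K)), X ^ n * m.2) := by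
  induction n generalizing m with
  | zero => simp [Prod.ext_iff]
  | succ n ih =>
    rw [pow_succ, Module.End.mul_apply, ih (Ab m), Ab_apply]
    push_cast
    refine Prod.ext ?_ ?_
    · show (m.1.comp (X + C 1)).comp (X + C (n:K)) = m.1.comp (X + C ((n:K)+1))
      rw [comp_assoc]
      congr 1
      simp [add_comp]
      ring
    · show X ^ n * (X * m.2) = X ^ (n+1) * m.2
      ring

variable (r : ℕ)

lemma AB_rel : (Ab * Bb r : Module.End K (V K)) = Bb r * Ab + Ab ^ r := by
  apply LinearMap.ext
  intro m
  have hc : (1:K) + ((r:K)-1) = (r:K) := by ring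
  have hc' : ((r:K)-1) + 1 = (r:K) := by ring
  have h1 : ((X : Polynomial K) + C ((r:K)-1)).comp (X + C 1) = X + C (r:K) := by
    rw [add_comp, X_comp, C_comp, add_assoc, ← C_add (a := (1:K)) (b := (r:K)-1), hc]
  have h2 : ((X : Polynomial K) + C (1:K)).comp (X + C ((r:K)-1)) = X + C (r:K) := by
    rw [add_comp, X_comp, C_comp, add_assoc, ← C_add (a := (r:K)-1) (b := (1:K)), hc']
  simp only [Module.End.mul_apply, LinearMap.add_apply, Ab_pow, Ab_apply, Bb_apply,
    Prod.mk_add_mk, Prod.mk.injEq]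
  constructor
  · rw [add_comp, mul_comp, X_comp, smul_comp, one_comp, comp_assoc, h1, comp_assoc, h2,
      eval_mul, eval_X, one_mul, C_1]
    ring
  · rw [derivative_mul, derivative_X]
    ring

/-- the algebra morphism from the free algebra -/
def Fhom : FreeAlgebra K (Fin 2) →ₐ[K] Module.End K (V K) :=
  FreeAlgebra.lift K ![(Ab : Module.End K (V K)), Bb r]

lemma Fhom_rel : ∀ ⦃x y : FreeAlgebra K (Fin 2)⦄, oreRel K r x y → Fhom r x = Fhom r y := by
  rintro x y ⟨hx, hy⟩
  subst hx hy
  simp only [map_mul, map_add, map_pow, Fhom, FreeAlgebra.lift_ι_apply]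
  show Ab * Bb r = Bb r * Ab + Ab ^ r
  exact AB_rel r

/-- the representation of the Ore extension -/
def rho : OreExt K r →ₐ[K] Module.End K (V K) :=
  RingQuot.liftAlgHom K ⟨Fhom r, Fhom_rel r⟩

/-- The module structure on `V K` over the Ore extension. -/
instance modInst : Module (OreExt K r) (V K) := Module.compHom _ (rho (K := K) r).toRingHom

lemma smul_def (a : OreExt K r) (m : V K) : a • m = rho r a m := rfl

variable (K) in
def agen : OreExt K r := RingQuot.mkAlgHom K (oreRel K r) (FreeAlgebra.ι K (0 : Fin 2))
variable (K) in
def bgen : OreExt K r := RingQuot.mkAlgHom K (oreRel K r) (FreeAlgebra.ι K (1 : Fin 2))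

lemma agen_smul (m : V K) : agen K r • m = Ab m := by
  rw [smul_def, agen, rho, RingQuot.liftAlgHom_mkAlgHom_apply]
  simp [Fhom, FreeAlgebra.lift_ι_apply]

lemma bgen_smul (m : V K) : bgen K r • m = Bb r m := by
  rw [smul_def, bgen, rho, RingQuot.liftAlgHom_mkAlgHom_apply]
  simp [Fhom, FreeAlgebra.lift_ι_apply]

lemma agen_pow_smul (n : ℕ) (m : V K) : (agen K r ^ n) • m = (Ab ^ n) m := by
  induction n generalizing m with
  | zero => rw [pow_zero, one_smul, pow_zero, Module.End.one_apply]
  | succ n ih =>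
    rw [pow_succ, mul_smul, pow_succ, Module.End.mul_apply, ← agen_smul, ih (agen K r • m),
      agen_smul]

lemma algmap_smul (c : K) (m : V K) : (algebraMap K (OreExt K r) c) • m = c • m := by
  rw [smul_def, AlgHom.commutes]
  rfl

lemma smul_stable (W : Submodule K (V K)) (hA : ∀ m ∈ W, Ab m ∈ W)
    (hB : ∀ m ∈ W, Bb r m ∈ W) :
    ∀ y : FreeAlgebra K (Fin 2), ∀ m ∈ W, RingQuot.mkAlgHom K (oreRel K r) y • m ∈ W := by
  intro y
  induction y using FreeAlgebra.induction with
  | grade0 c =>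
    intro m hm
    have heq : (RingQuot.mkAlgHom K (oreRel K r)) ((algebraMap K (FreeAlgebra K (Fin 2))) c)
        = algebraMap K (OreExt K r) c := by
      rw [AlgHom.commutes]
    rw [heq, algmap_smul]
    exact W.smul_mem c hm
  | grade1 i =>
    intro m hm
    fin_cases i
    · rw [show (⟨0, by omega⟩ : Fin 2) = 0 from rfl, ← agen, agen_smul]
      exact hA m hm
    · rw [show (⟨1, by omega⟩ : Fin 2) = 1 from rfl, ← bgen, bgen_smul]
      exact hB m hm
  | mul x y ihx ihy =>
    intro m hm
    rw [map_mul, mul_smul]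
    exact ihx _ (ihy _ hm)
  | add x y ihx ihy =>
    intro m hm
    rw [map_add, add_smul]
    exact W.add_mem (ihx _ hm) (ihy _ hm)

/-- upgrade a `K`-submodule stable under the two operators to a submodule over the Ore
extension -/
def mkSub (W : Submodule K (V K)) (hA : ∀ m ∈ W, Ab m ∈ W) (hB : ∀ m ∈ W, Bb r m ∈ W) :
    Submodule (OreExt K r) (V K) where
  carrier := W
  add_mem' := W.add_mem
  zero_mem' := W.zero_mem
  smul_mem' := by
    intro c m hm
    obtain ⟨y, rfl⟩ := RingQuot.mkAlgHom_surjective K (oreRel K r) c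
    exact smul_stable r W hA hB y m hm

lemma mem_mkSub {W : Submodule K (V K)} {hA} {hB} {m : V K} :
    m ∈ mkSub r W hA hB ↔ m ∈ W := Iff.rfl

section CharZero
variable [CharZero K]

lemma comp_fixed (x : Polynomial K) (h : x.comp (X + C 1) = x) : x = C (x.eval 0) := by
  have key : ∀ n : ℕ, x.eval (n : K) = x.eval 0 := by
    intro n
    induction n with
    | zero => norm_num
    | succ n ih =>
      have h2 := congrArg (eval (n : K)) h
      rw [eval_comp] at h2
      simp only [eval_add, eval_X, eval_C] at h2
      rw [← ih, ← h2]
      push_cast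
      ring_nf
  by_contra hx
  have hp : x - C (x.eval 0) ≠ 0 := sub_ne_zero.mpr hx
  have hroots : Set.Finite {y : K | (x - C (x.eval 0)).IsRoot y} :=
    Polynomial.finite_setOf_isRoot hp
  have hinf : Set.Infinite {y : K | (x - C (x.eval 0)).IsRoot y} := by
    apply Set.infinite_of_injective_forall_mem (f := fun n : ℕ => (n : K)) Nat.cast_injective
    intro n
    simp [IsRoot, key n]
  exact hinf hroots

variable {r} in
lemma fst_stable {N : Submodule (OreExt K r) (V K)} {x : Polynomial K}
    (hx : (x, (0 : Polynomial K)) ∈ N) :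
    (x.comp (X + C 1), (0 : Polynomial K)) ∈ N ∧
      (X * x.comp (X + C ((r : K) - 1)), (0 : Polynomial K)) ∈ N ∧
      ∀ c : K, (c • x, (0 : Polynomial K)) ∈ N := by
  refine ⟨?_, ?_, ?_⟩
  · have h := N.smul_mem (agen K r) hx
    rw [agen_smul, Ab_apply] at h
    simpa using h
  · have h := N.smul_mem (bgen K r) hx
    rw [bgen_smul, Bb_apply] at h
    simpa using h
  · intro c
    have h := N.smul_mem (algebraMap K (OreExt K r) c) hx
    rw [algmap_smul] at h
    simpa using h

variable {r} in
lemma one_mem_of_ne_zero {N : Submodule (OreExt K r) (V K)} {x : Polynomial K}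
    (hx : x ≠ 0) (hmem : (x, (0 : Polynomial K)) ∈ N) :
    ((1 : Polynomial K), (0 : Polynomial K)) ∈ N := by
  suffices h : ∀ d : ℕ, ∀ x : Polynomial K, x.natDegree = d → x ≠ 0 →
      ((x, (0 : Polynomial K)) ∈ N) → ((1 : Polynomial K), (0 : Polynomial K)) ∈ N by
    exact h _ x rfl hx hmem
  intro d
  induction d using Nat.strong_induction_on with
  | _ d IH =>
  intro x hd hx hmem
  by_cases hfix : x.comp (X + C 1) = x
  · obtain h := comp_fixed x hfix
    have hc : x.eval 0 ≠ 0 := by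
      intro h0
      rw [h0, map_zero] at h
      exact hx h
    have h2 := (fst_stable hmem).2.2 (x.eval 0)⁻¹
    have hx1 : (x.eval 0)⁻¹ • x = 1 := by
      nth_rewrite 2 [h]
      rw [smul_C, smul_eq_mul, inv_mul_cancel₀ hc, map_one]
    rw [hx1] at h2
    exact h2
  · set x' := x.comp (X + C 1) - x with hx'
    have hxne : x' ≠ 0 := sub_ne_zero.mpr hfix
    have hmem' : (x', (0 : Polynomial K)) ∈ N := by
      have h := N.sub_mem (fst_stable hmem).1 hmem
      simpa [hx'] using h
    have hdeg : x'.natDegree < d := by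
      have hne1 : ((X : Polynomial K) + C 1).natDegree ≠ 0 := by
        rw [natDegree_X_add_C]
        omega
      have hlc : (x.comp (X + C 1)).leadingCoeff = x.leadingCoeff := by
        rw [leadingCoeff_comp hne1, (monic_X_add_C (1:K)).leadingCoeff, one_pow, mul_one]
      have hcompne : x.comp (X + C 1) ≠ 0 := by
        intro h0
        apply hx
        rw [← leadingCoeff_eq_zero, ← hlc, h0, leadingCoeff_zero]
      have hdc : (x.comp (X + C 1)).degree = x.degree := by
        rw [degree_eq_natDegree hcompne, degree_eq_natDegree hx, natDegree_comp,
          natDegree_X_add_C, mul_one]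
      have hdlt : x'.degree < x.degree := by
        rw [hx', ← hdc]
        exact degree_sub_lt hdc hcompne hlc
      rw [← hd]
      exact natDegree_lt_natDegree hxne hdlt
    exact IH _ hdeg x' rfl hxne hmem'

variable {r} in
lemma S0_le {N : Submodule (OreExt K r) (V K)} {x : Polynomial K}
    (hx : x ≠ 0) (hmem : (x, (0 : Polynomial K)) ∈ N) :
    ∀ y : Polynomial K, (y, (0 : Polynomial K)) ∈ N := by
  have h1 := one_mem_of_ne_zero hx hmem
  suffices h : ∀ d : ℕ, ∀ y : Polynomial K, y.natDegree = d →
      (y, (0 : Polynomial K)) ∈ N by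
    exact fun y => h _ y rfl
  intro d
  induction d using Nat.strong_induction_on with
  | _ d IH =>
  intro y hd
  rcases eq_or_ne y 0 with rfl | hy0
  · exact N.zero_mem
  rcases Nat.eq_zero_or_pos d with rfl | hdpos
  · have hy : y = C (y.coeff 0) := eq_C_of_natDegree_eq_zero hd
    have h2 := (fst_stable h1).2.2 (y.coeff 0)
    rw [smul_eq_C_mul, mul_one] at h2
    rwa [← hy] at h2
  · have hXd : ((X : Polynomial K) ^ (d-1), (0 : Polynomial K)) ∈ N :=
      IH (d-1) (by omega) _ (natDegree_X_pow _)
    have hq0 : ((X : Polynomial K) ^ (d-1)).comp (X + C ((r:K)-1))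
        = ((X : Polynomial K) + C ((r:K)-1)) ^ (d-1) := X_pow_comp
    have hq : ((X : Polynomial K) * (X + C ((r:K)-1)) ^ (d-1), (0 : Polynomial K)) ∈ N := by
      have h2 := (fst_stable hXd).2.1
      rwa [hq0] at h2
    set q : Polynomial K := X * (X + C ((r:K)-1)) ^ (d-1) with hqdef
    have hqm : q.Monic := monic_X.mul ((monic_X_add_C _).pow _)
    have hqdeg : q.natDegree = d := by
      rw [hqdef, natDegree_mul X_ne_zero (pow_ne_zero _ (X_add_C_ne_zero _)),
        natDegree_pow, natDegree_X, natDegree_X_add_C]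
      omega
    set c := y.coeff d with hcdef
    have hc0 : c ≠ 0 := by
      have : y.leadingCoeff ≠ 0 := leadingCoeff_ne_zero.mpr hy0
      rwa [leadingCoeff, hd] at this
    have hcq : (C c * q, (0 : Polynomial K)) ∈ N := by
      have h2 := (fst_stable hq).2.2 c
      rwa [smul_eq_C_mul] at h2
    have hlt : (y - C c * q).natDegree < d := by
      by_cases hz : y - C c * q = 0
      · rw [hz, natDegree_zero]; omega
      · have hdegq : (C c * q).degree = y.degree := by
          rw [degree_mul, degree_C hc0, zero_add, degree_eq_natDegree hqm.ne_zero,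
            degree_eq_natDegree hy0, hqdeg, hd]
        have hdeg : (y - C c * q).degree < y.degree := by
          apply degree_sub_lt hdegq.symm hy0
          rw [leadingCoeff_mul, leadingCoeff_C, hqm.leadingCoeff, mul_one, leadingCoeff, hd]
        have := natDegree_lt_natDegree hz hdeg
        rwa [hd] at this
    have hsub : (y - C c * q, (0 : Polynomial K)) ∈ N := IH _ hlt _ rfl
    have h2 := N.add_mem hsub hcq
    simpa using h2

lemma coeff_X_mul_derivative (f : Polynomial K) (i : ℕ) :
    (X * derivative f).coeff i = (i : K) * f.coeff i := by
  cases i with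
  | zero => simp
  | succ n =>
    rw [coeff_X_mul, coeff_derivative]
    push_cast
    ring

lemma eq_smul_X_pow {f : Polynomial K} (hf : f ≠ 0)
    (h : f.natDegree ≤ f.natTrailingDegree) :
    f = f.coeff f.natDegree • X ^ f.natDegree := by
  ext i
  rw [coeff_smul, coeff_X_pow]
  rcases lt_trichotomy i f.natDegree with hlt | rfl | hgt
  · rw [coeff_eq_zero_of_lt_natTrailingDegree (lt_of_lt_of_le hlt h)]
    simp [Nat.ne_of_lt hlt]
  · simp
  · rw [coeff_eq_zero_of_natDegree_lt hgt]
    simp [Nat.ne_of_gt hgt]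

variable {r} in
lemma mono_extract {N : Submodule (OreExt K r) (V K)} :
    ∀ (n : ℕ) (f x : Polynomial K), ((x, f) ∈ N) → f ≠ 0 →
      f.natDegree - f.natTrailingDegree ≤ n →
      ∃ (k : ℕ) (v : Polynomial K), (v, (X : Polynomial K) ^ k) ∈ N := by
  have base : ∀ (f x : Polynomial K), ((x, f) ∈ N) → f ≠ 0 →
      f.natDegree ≤ f.natTrailingDegree →
      ∃ (k : ℕ) (v : Polynomial K), (v, (X : Polynomial K) ^ k) ∈ N := by
    intro f x hmem hf h
    have hc : f.coeff f.natDegree ≠ 0 := by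
      have h2 : f.leadingCoeff ≠ 0 := leadingCoeff_ne_zero.mpr hf
      exact h2
    have hfe := eq_smul_X_pow hf h
    set d := f.natDegree with hdd
    set c := f.coeff d with hcc
    refine ⟨d, c⁻¹ • x, ?_⟩
    have h2 := N.smul_mem (algebraMap K (OreExt K r) c⁻¹) hmem
    rw [algmap_smul, Prod.smul_mk] at h2
    have h3 : c⁻¹ • f = X ^ d := by
      rw [hfe, smul_smul, inv_mul_cancel₀ hc, one_smul]
    rwa [h3] at h2
  intro n
  induction n with
  | zero =>
    intro f x hmem hf hsp
    exact base f x hmem hf (by omega)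
  | succ n IH =>
    intro f x hmem hf hsp
    by_cases hbase : f.natDegree ≤ f.natTrailingDegree
    · exact base f x hmem hf hbase
    push_neg at hbase
    set k := f.natTrailingDegree with hk
    set d := f.natDegree with hd
    -- membership chain producing f₁ = (X * derivative f - C k * f) * X ^ r
    have h1 := N.smul_mem (bgen K r) hmem
    rw [bgen_smul, Bb_apply] at h1
    have h2 := N.neg_mem h1
    rw [Prod.neg_mk, neg_neg] at h2
    have h3 := N.smul_mem (agen K r) h2
    rw [agen_smul, Ab_apply] at h3
    have h4 := N.smul_mem (agen K r ^ r) hmem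
    rw [agen_pow_smul, Ab_pow] at h4
    have h5 := N.smul_mem (algebraMap K (OreExt K r) ((k : K))) h4
    rw [algmap_smul, Prod.smul_mk] at h5
    have h6 := N.sub_mem h3 h5
    rw [Prod.mk_sub_mk] at h6
    set f₁ : Polynomial K := (X * derivative f - C (k : K) * f) * X ^ r with hf₁
    have heq : X * (X ^ r * derivative f) - (k : K) • (X ^ r * f) = f₁ := by
      rw [hf₁, smul_eq_C_mul]
      ring
    rw [heq] at h6
    -- coefficients of f₁
    have hcoeff : ∀ i : ℕ, f₁.coeff (i + r) = ((i : K) - (k : K)) * f.coeff i := by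
      intro i
      rw [hf₁, coeff_mul_X_pow, coeff_sub, coeff_X_mul_derivative, coeff_C_mul]
      ring
    have hcd : f.coeff d ≠ 0 := leadingCoeff_ne_zero.mpr hf
    have hne : f₁ ≠ 0 := by
      intro h0
      have := hcoeff d
      rw [h0, coeff_zero] at this
      have hdk : ((d : K) - (k : K)) ≠ 0 := by
        rw [sub_ne_zero]
        exact_mod_cast Nat.ne_of_gt hbase
      exact hdk (by
        rcases mul_eq_zero.mp this.symm with h | h
        · exact h
        · exact absurd h hcd)
    have hdegle : f₁.natDegree ≤ d + r := by
      calc f₁.natDegree ≤ (X * derivative f - C (k:K) * f).natDegree + (X ^ r : Polynomial K).natDegree :=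
            natDegree_mul_le
        _ ≤ d + r := by
            rw [natDegree_X_pow]
            have hXd : (X * derivative f).natDegree ≤ d := by
              calc (X * derivative f).natDegree ≤ 1 + (derivative f).natDegree := by
                    simpa [natDegree_X] using (natDegree_mul_le (p := (X : Polynomial K))
                      (q := derivative f))
                _ ≤ d := by
                    have := natDegree_derivative_le f
                    omega
            have hCf : (C (k:K) * f).natDegree ≤ d := by
              calc (C (k:K) * f).natDegree ≤ (C (k:K)).natDegree + f.natDegree :=
                    natDegree_mul_le
                _ ≤ d := by simp [natDegree_C]; exact hd.ge
            have := natDegree_sub_le (X * derivative f) (C (k:K) * f)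
            omega
    have htrail : k + r + 1 ≤ f₁.natTrailingDegree := by
      apply le_natTrailingDegree hne
      intro m hm
      rcases Nat.lt_or_ge m r with hmr | hmr
      · rw [hf₁, coeff_mul_X_pow']
        simp [Nat.not_le_of_lt hmr]
      · obtain ⟨i, rfl⟩ : ∃ i, m = i + r := ⟨m - r, by omega⟩
        rw [hcoeff i]
        have hik : i ≤ k := by omega
        rcases Nat.lt_or_ge i k with hik' | hik'
        · rw [coeff_eq_zero_of_lt_natTrailingDegree (by omega), mul_zero]
        · have : i = k := by omega
          subst this
          simp
    have hsp1 : f₁.natDegree - f₁.natTrailingDegree ≤ n := by omega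
    exact IH f₁ _ h6 hne hsp1

variable {r} in
lemma exists_fst (hr : 1 ≤ r) (N : Submodule (OreExt K r) (V K)) (hN : N ≠ ⊥) :
    ∃ x : Polynomial K, x ≠ 0 ∧ (x, (0 : Polynomial K)) ∈ N := by
  obtain ⟨m, hm, hm0⟩ := Submodule.exists_mem_ne_zero_of_ne_bot hN
  by_cases h2 : m.2 = 0
  · refine ⟨m.1, ?_, ?_⟩
    · intro h1
      exact hm0 (Prod.ext h1 h2)
    · have : m = (m.1, (0 : Polynomial K)) := Prod.ext rfl h2
      rwa [← this]
  · obtain ⟨k, v, hkv⟩ := mono_extract (m.2.natDegree - m.2.natTrailingDegree) m.2 m.1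
      (by rwa [Prod.mk.eta]) h2 le_rfl
    -- the element  b•(v, X^k) + k•(a^(r-1)•(v, X^k))  lies in N ∩ (S × 0)
    have hb := N.smul_mem (bgen K r) hkv
    rw [bgen_smul, Bb_apply] at hb
    have ha := N.smul_mem (agen K r ^ (r-1)) hkv
    rw [agen_pow_smul, Ab_pow] at ha
    have hka := nsmul_mem ha k
    have he := N.add_mem hb hka
    rw [Prod.smul_mk, Prod.mk_add_mk] at he
    set v₁ : Polynomial K := v.comp (X + C ((r:K) - 1)) with hv₁
    have hcast : ((r - 1 : ℕ) : K) = (r : K) - 1 := by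
      push_cast [Nat.cast_sub hr]
      ring
    have hsnd : -(X ^ r * derivative ((X : Polynomial K) ^ k)) + k • (X ^ (r-1) * X ^ k)
        = 0 := by
      rw [derivative_X_pow, nsmul_eq_mul]
      cases k with
      | zero => simp
      | succ k' =>
        push_cast
        have hpw : (X : Polynomial K) ^ (r - 1 + (k' + 1)) = X ^ r * X ^ k' := by
          rw [← pow_add]
          congr 1
          omega
        have hC : (C ((k' : K) + 1) : Polynomial K) = ((k' : Polynomial K) + 1) := by
          simp
        rw [← pow_add, hpw, hC]
        ring
    have hfst : (X * v.comp (X + C ((r:K) - 1)) + (((X : Polynomial K) ^ k).eval 1) • 1)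
        + k • (v.comp (X + C ((r - 1 : ℕ) : K)))
        = (X + C (k : K)) * v₁ + 1 := by
      rw [hcast, ← hv₁, eval_pow, eval_X, one_pow, one_smul, nsmul_eq_mul]
      push_cast
      rw [← C_eq_natCast]
      ring
    rw [hsnd, hfst] at he
    refine ⟨(X + C (k : K)) * v₁ + 1, ?_, he⟩
    intro h0
    have := congrArg (eval (-(k : K))) h0
    simp at this

variable {r} in
lemma mem_of_ne_bot (hr : 1 ≤ r) {N : Submodule (OreExt K r) (V K)} (hN : N ≠ ⊥)
    (y : Polynomial K) : (y, (0 : Polynomial K)) ∈ N := by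
  obtain ⟨x, hx, hmem⟩ := exists_fst hr N hN
  exact S0_le hx hmem y

lemma monolithic (hr : 1 ≤ r) :
    sInf {N : Submodule (OreExt K r) (V K) | N ≠ ⊥} ≠ ⊥ := by
  intro hbot
  have hle : ((1 : Polynomial K), (0 : Polynomial K))
      ∈ sInf {N : Submodule (OreExt K r) (V K) | N ≠ ⊥} := by
    rw [Submodule.mem_sInf]
    intro N hN
    exact mem_of_ne_bot hr hN 1
  rw [hbot, Submodule.mem_bot] at hle
  have : (1 : Polynomial K) = 0 := congrArg Prod.fst hle
  exact one_ne_zero this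

lemma finite_mod (hr : 1 ≤ r) : Module.Finite (OreExt K r) (V K) := by
  constructor
  rw [Submodule.fg_def]
  refine ⟨({((1 : Polynomial K), (0 : Polynomial K)),
    ((0 : Polynomial K), (1 : Polynomial K))} : Set (V K)),
    Set.Finite.insert _ (Set.finite_singleton _), ?_⟩
  rw [eq_top_iff]
  set sp := Submodule.span (OreExt K r)
    ({((1 : Polynomial K), (0 : Polynomial K)), ((0 : Polynomial K), (1 : Polynomial K))} :
      Set (V K)) with hsp
  have h10 : ((1 : Polynomial K), (0 : Polynomial K)) ∈ sp :=
    Submodule.subset_span (by simp)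
  have h01 : ((0 : Polynomial K), (1 : Polynomial K)) ∈ sp :=
    Submodule.subset_span (by simp)
  have hfst : ∀ x : Polynomial K, (x, (0 : Polynomial K)) ∈ sp :=
    S0_le one_ne_zero h10
  have hsnd : ∀ p : Polynomial K, ((0 : Polynomial K), p) ∈ sp := by
    intro p
    induction p using Polynomial.induction_on' with
    | add p q hp hq =>
      have := sp.add_mem hp hq
      simpa using this
    | monomial n c =>
      have ha := sp.smul_mem (agen K r ^ n) h01
      rw [agen_pow_smul, Ab_pow] at ha
      simp only [zero_comp, mul_one] at ha
      have hc := sp.smul_mem (algebraMap K (OreExt K r) c) ha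
      rw [algmap_smul, Prod.smul_mk, smul_zero, smul_X_eq_monomial] at hc
      exact hc
  rintro ⟨x, f⟩ -
  have := sp.add_mem (hfst x) (hsnd f)
  simpa using this

/-- the `K`-submodule of pairs whose second component is divisible by `X^k` -/
def chainW (k : ℕ) : Submodule K (V K) where
  carrier := {m : V K | X ^ k ∣ m.2}
  add_mem' := fun ha hb => dvd_add ha hb
  zero_mem' := dvd_zero _
  smul_mem' := by
    intro c m hm
    show (X : Polynomial K) ^ k ∣ c • m.2
    rw [smul_eq_C_mul]
    exact hm.mul_left _

lemma chainW_A (k : ℕ) : ∀ m ∈ chainW (K := K) k, Ab m ∈ chainW k := by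
  intro m hm
  show (X : Polynomial K) ^ k ∣ X * m.2
  exact (hm : _ ∣ m.2).mul_left _

lemma chainW_B (hr : 1 ≤ r) (k : ℕ) : ∀ m ∈ chainW (K := K) k, Bb r m ∈ chainW k := by
  intro m hm
  show (X : Polynomial K) ^ k ∣ -(X ^ r * derivative m.2)
  rw [dvd_neg]
  obtain ⟨g, hg⟩ := (hm : _ ∣ m.2)
  rw [hg, derivative_mul, mul_add]
  apply dvd_add
  · rw [derivative_X_pow]
    rcases Nat.eq_zero_or_pos k with rfl | hk
    · simp
    · have hx : (X : Polynomial K) ^ r * X ^ (k-1) = X ^ k * X ^ (r-1) := by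
        rw [← pow_add, ← pow_add]
        congr 1
        omega
      have heq : (X : Polynomial K) ^ r * (C (k:K) * X ^ (k-1) * g)
          = X ^ k * (X ^ (r-1) * (C (k:K) * g)) := by
        calc (X : Polynomial K) ^ r * (C (k:K) * X ^ (k-1) * g)
            = (X ^ r * X ^ (k-1)) * (C (k:K) * g) := by ring
          _ = (X ^ k * X ^ (r-1)) * (C (k:K) * g) := by rw [hx]
          _ = X ^ k * (X ^ (r-1) * (C (k:K) * g)) := by ring
      rw [heq]
      exact Dvd.intro _ rfl
  · exact ⟨X ^ r * derivative g, by ring⟩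

/-- the descending chain of submodules -/
def chainN (hr : 1 ≤ r) (k : ℕ) : Submodule (OreExt K r) (V K) :=
  mkSub r (chainW k) (chainW_A k) (chainW_B r hr k)

lemma not_artinian (hr : 1 ≤ r) : ¬ IsArtinian (OreExt K r) (V K) := by
  intro hart
  have hmono : ∀ k l : ℕ, k ≤ l → chainN (K := K) r hr l ≤ chainN (K := K) r hr k := by
    intro k l hkl m hm
    exact dvd_trans (pow_dvd_pow X hkl) hm
  obtain ⟨n, hn⟩ := IsArtinian.monotone_stabilizes
    (⟨fun k => OrderDual.toDual (chainN (K := K) r hr k), fun k l hkl => hmono k l hkl⟩ :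
      ℕ →o (Submodule (OreExt K r) (V K))ᵒᵈ)
  have heq : chainN (K := K) r hr n = chainN (K := K) r hr (n+1) := hn (n+1) (by omega)
  have hmem : ((0 : Polynomial K), (X : Polynomial K) ^ n) ∈ chainN (K := K) r hr n :=
    dvd_refl _
  rw [heq] at hmem
  have hdvd : (X : Polynomial K) ^ (n+1) ∣ X ^ n := hmem
  have := natDegree_le_of_dvd hdvd (pow_ne_zero _ X_ne_zero)
  rw [natDegree_pow, natDegree_pow, natDegree_X] at this
  omega

end CharZero
end OreAux

/-- over a field of characteristic zero, for `r ≥ 1`, the Ore extension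
`A = K⟨a,b⟩/(ab − ba − a^r)` has a finitely generated monolithic left module that is not
artinian, i.e. does not have property `(⋄)`. -/
theorem oreExt_not_hasDiamond {K : Type u} [Field K] [CharZero K] (r : ℕ) (hr : 1 ≤ r) :
    ¬ HasDiamond (OreExt K r) := by
  intro h
  exact OreAux.not_artinian r hr
    (h (OreAux.V K) (OreAux.finite_mod r hr) (OreAux.monolithic r hr))

end
end
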